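/- Let p ≤ q be integers that are both odd. Then the block matrix M_{ρ(p,q)} of the string representation ρ(p,q) is surjective and its kernel has dimension 1 over κ. -/

import Mathlib

open Module

/-- A representation of the cyclic quiver `G_{2m}`: `W i` is the odd vertex space `V_{2i+1}`
(0-based, so `W 0 = V_1`), `U i` is the even vertex space `V_{2i+2}`,
`α i : V_{2i+1} → V_{2i+2}` and `β i : V_{2i+3} → V_{2i+2}` (indices of vertices mod `2m`). -/
structure QRep (κ : Type) [Field κ] (m : ℕ) [NeZero m] where
  W : Fin m → Type
  U : Fin m → Type
  [accW : ∀ i, AddCommGroup (W i)]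
  [accU : ∀ i, AddCommGroup (U i)]
  [modW : ∀ i, Module κ (W i)]
  [modU : ∀ i, Module κ (U i)]
  [fdW : ∀ i, FiniteDimensional κ (W i)]
  [fdU : ∀ i, FiniteDimensional κ (U i)]
  α : ∀ i, W i →ₗ[κ] U i
  β : ∀ i, W (i + 1) →ₗ[κ] U i

attribute [instance] QRep.accW QRep.accU QRep.modW QRep.modU QRep.fdW QRep.fdU

namespace QRep

variable {κ : Type} [Field κ] {m : ℕ} [NeZero m]

/-- The block matrix `M_ρ : ⊕ V_{2i-1} → ⊕ V_{2i}`,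
`M_ρ(v₁, v₃, …) = (α₁v₁ − β₁v₃, α₂v₃ − β₂v₅, …, α_m v_{2m−1} − β_m v₁)`. -/
def blockMap (ρ : QRep κ m) : (∀ i, ρ.W i) →ₗ[κ] ∀ i, ρ.U i :=
  LinearMap.pi fun i => (ρ.α i).comp (LinearMap.proj i) - (ρ.β i).comp (LinearMap.proj (i + 1))

/-- Direct sum of two representations. -/
def dsum (ρ σ : QRep κ m) : QRep κ m where
  W i := ρ.W i × σ.W i
  U i := ρ.U i × σ.U i
  α i := (ρ.α i).prodMap (σ.α i)
  β i := (ρ.β i).prodMap (σ.β i)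

/-- Direct sum of a finite family of representations. -/
def dsumFin {N : ℕ} (f : Fin N → QRep κ m) : QRep κ m where
  W i := ∀ j, (f j).W i
  U i := ∀ j, (f j).U i
  α i := LinearMap.pi fun j => ((f j).α i).comp (LinearMap.proj j)
  β i := LinearMap.pi fun j => ((f j).β i).comp (LinearMap.proj j)

/-- An isomorphism of representations. -/
structure Iso (ρ σ : QRep κ m) where
  φW : ∀ i, ρ.W i ≃ₗ[κ] σ.W i
  φU : ∀ i, ρ.U i ≃ₗ[κ] σ.U i
  commα : ∀ i x, φU i (ρ.α i x) = σ.α i (φW i x)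
  commβ : ∀ i x, φU i (ρ.β i x) = σ.β i (φW (i + 1) x)

def IsIsomorphic (ρ σ : QRep κ m) : Prop := Nonempty (Iso ρ σ)

/-- A representation is nontrivial if some vertex space is nonzero. -/
def NontrivialRep (ρ : QRep κ m) : Prop :=
  (∃ i, Nontrivial (ρ.W i)) ∨ (∃ i, Nontrivial (ρ.U i))

/-- A representation is indecomposable if it is nontrivial and not isomorphic to a direct
sum of two nontrivial representations. -/
def Indecomposable (ρ : QRep κ m) : Prop :=
  ρ.NontrivialRep ∧ ∀ σ τ : QRep κ m, σ.NontrivialRep → τ.NontrivialRep →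
    ¬ ρ.IsIsomorphic (σ.dsum τ)

end QRep

namespace QRep

open Fin.NatCast Fin.CommRing

variable {κ : Type} [Field κ] {m : ℕ} [NeZero m]

/-- Transport of an odd vertex space along an equality of indices (linear map version). -/
def castW (ρ : QRep κ m) {a b : Fin m} (h : a = b) : ρ.W a →ₗ[κ] ρ.W b := by
  subst h; exact LinearMap.id

/-- Transport of an odd vertex space along an equality of indices (equiv version). -/
def castWE (ρ : QRep κ m) {a b : Fin m} (h : a = b) : ρ.W a ≃ₗ[κ] ρ.W b := by
  subst h; exact LinearEquiv.refl κ _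

/-- Iterated composite of the maps `g i : W i → W (i+1)`, `n` steps starting at vertex `i`. -/
def cyclicComp (ρ : QRep κ m) (g : ∀ i, ρ.W i →ₗ[κ] ρ.W (i + 1)) :
    (n : ℕ) → ∀ i : Fin m, ρ.W i →ₗ[κ] ρ.W (i + (n : Fin m))
  | 0, i => ρ.castW (by simp)
  | n + 1, i =>
      (ρ.castW (show i + (n : Fin m) + 1 = i + ((n + 1 : ℕ) : Fin m) by push_cast; ring)).comp
        ((g (i + (n : Fin m))).comp (cyclicComp ρ g n i))

/-- The monodromy `T = β_m⁻¹ ∘ α_m ∘ ⋯ ∘ β_1⁻¹ ∘ α_1 : V_1 → V_1`, where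
`g i = β i⁻¹ ∘ α i` is given as data. -/
def monodromy (ρ : QRep κ m) (g : ∀ i, ρ.W i →ₗ[κ] ρ.W (i + 1)) : ρ.W 0 →ₗ[κ] ρ.W 0 :=
  (ρ.castW (show (0 : Fin m) + (m : Fin m) = 0 by simp [Fin.natCast_self])).comp
    (cyclicComp ρ g m 0)

/-- Iterated composite of the equivalences `e i : W i ≃ W (i+1)`, `n` steps starting at `i`. -/
def cyclicCompE (ρ : QRep κ m) (e : ∀ i, ρ.W i ≃ₗ[κ] ρ.W (i + 1)) :
    (n : ℕ) → ∀ i : Fin m, ρ.W i ≃ₗ[κ] ρ.W (i + (n : Fin m))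
  | 0, i => ρ.castWE (by simp)
  | n + 1, i =>
      ((cyclicCompE ρ e n i).trans (e (i + (n : Fin m)))).trans
        (ρ.castWE (show i + (n : Fin m) + 1 = i + ((n + 1 : ℕ) : Fin m) by push_cast; ring))

/-- `T_i`, the monodromy based at the odd vertex `V_{2i+1}` (so `Ti e 0` is `T_m = T`). -/
def Ti (ρ : QRep κ m) (e : ∀ i, ρ.W i ≃ₗ[κ] ρ.W (i + 1)) (i : Fin m) : ρ.W i ≃ₗ[κ] ρ.W i :=
  (cyclicCompE ρ e m i).trans (ρ.castWE (show i + (m : Fin m) = i by simp [Fin.natCast_self]))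

/-- `C_i = g_i ∘ ⋯ ∘ g_1 : V_1 → V_{2i+1}`. -/
def Ci (ρ : QRep κ m) (e : ∀ i, ρ.W i ≃ₗ[κ] ρ.W (i + 1)) (i : Fin m) : ρ.W 0 ≃ₗ[κ] ρ.W i :=
  (cyclicCompE ρ e (i : ℕ) 0).trans
    (ρ.castWE (show (0 : Fin m) + ((i : ℕ) : Fin m) = i by simp [Fin.cast_val_eq_self]))

end QRep

/-- Index set of the basis vectors `e_l`, `p ≤ l ≤ q`, `l ≡ j (mod 2m)`,
of a vertex space of the string representation `ρ(p,q)`. -/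
noncomputable def strIdx (m : ℕ) (p q : ℤ) (j : ZMod (2 * m)) : Finset ℤ :=
  (Finset.Icc p q).filter fun l => ((l : ZMod (2 * m)) = j)

/-- The linear map sending the basis vector `e_l` (`l ∈ T`) to the coordinate `l + d` (if present):
in matrix terms, the map whose `(l', l)` entry is `1` iff `l' + d = l`. -/
def eMap (κ : Type) [Field κ] (S T : Finset ℤ) (d : ℤ) : (S → κ) →ₗ[κ] T → κ where
  toFun f l := if h : ((l : ℤ) + d) ∈ S then f ⟨(l : ℤ) + d, h⟩ else 0
  map_add' f g := by
    funext l
    by_cases h : ((l : ℤ) + d) ∈ S <;> simp [h]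
  map_smul' c f := by
    funext l
    by_cases h : ((l : ℤ) + d) ∈ S <;> simp [h]

/-- The string representation `ρ(p,q)`: the vertex space at vertex `j` has basis
`{e_l : p ≤ l ≤ q, l ≡ j (mod 2m)}`, `α` sends `e_l` to `e_{l+1}` if `l+1 ≤ q` (else `0`),
and `β` sends `e_l` to `e_{l−1}` if `l−1 ≥ p` (else `0`). -/
noncomputable def strRep (κ : Type) [Field κ] (m : ℕ) [NeZero m] (p q : ℤ) : QRep κ m where
  W i := strIdx m p q ((2 * (i : ℕ) + 1 : ℕ)) → κ
  U i := strIdx m p q ((2 * (i : ℕ) + 2 : ℕ)) → κ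
  α _ := eMap κ _ _ (-1)
  β _ := eMap κ _ _ 1

/-- The `k × k` Jordan block `J(λ,k)`: `λ` on the diagonal, `1` on the superdiagonal. -/
def jordanMatrix (κ : Type) [Field κ] (lam : κ) (k : ℕ) : Matrix (Fin k) (Fin k) κ :=
  Matrix.of fun a b => if b = a then lam else if (b : ℕ) = (a : ℕ) + 1 then (1 : κ) else 0

/-- The Jordan-cell representation `ρ^J(λ,k)`: every vertex space is `κ^k`, `α_1 = J(λ,k)`,
and all other maps are the identity. -/
def jordanRep (κ : Type) [Field κ] (m : ℕ) [NeZero m] (lam : κ) (k : ℕ) : QRep κ m where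
  W _ := Fin k → κ
  U _ := Fin k → κ
  α i := if i = 0 then (jordanMatrix κ lam k).mulVecLin else LinearMap.id
  β _ := LinearMap.id

namespace StrAux

variable {m : ℕ} [NeZero m] {p q : ℤ}

lemma mem_strIdx_iff {l : ℤ} {b : ℕ} :
    l ∈ strIdx m p q ((b : ℕ) : ZMod (2*m)) ↔ p ≤ l ∧ l ≤ q ∧ (2*m : ℤ) ∣ ((b : ℤ) - l) := by
  simp only [strIdx, Finset.mem_filter, Finset.mem_Icc]
  constructor
  · rintro ⟨⟨h1, h2⟩, h3⟩
    refine ⟨h1, h2, ?_⟩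
    have h4 : (l : ZMod (2*m)) = ((b : ℤ) : ZMod (2*m)) := by rw [h3]; push_cast; ring
    have h5 := (ZMod.intCast_eq_intCast_iff _ _ _).mp h4
    have h6 := Int.ModEq.dvd h5
    simpa using h6
  · rintro ⟨h1, h2, h3⟩
    refine ⟨⟨h1, h2⟩, ?_⟩
    have h4 : l ≡ (b : ℤ) [ZMOD ((2*m : ℕ) : ℤ)] := Int.modEq_iff_dvd.mpr (by push_cast; exact h3)
    have h5 := (ZMod.intCast_eq_intCast_iff l b (2*m)).mpr h4
    exact_mod_cast h5

lemma hm_pos : 0 < (m : ℤ) := by exact_mod_cast Nat.pos_of_ne_zero (NeZero.ne m)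

lemma fin_eq_of_dvd {i i' : Fin m} (h : (m:ℤ) ∣ (i : ℤ) - (i' : ℤ)) : i = i' := by
  obtain ⟨k, hk⟩ := h
  have h1 : ((i : ℕ) : ℤ) < m := by exact_mod_cast i.isLt
  have h2 : ((i' : ℕ) : ℤ) < m := by exact_mod_cast i'.isLt
  have h3 : (0:ℤ) ≤ i := Int.natCast_nonneg _
  have h4 : (0:ℤ) ≤ i' := Int.natCast_nonneg _
  have hm := hm_pos (m := m)
  have hk0 : k = 0 := by
    by_contra hk0
    rcases (Ne.lt_or_gt hk0) with hlt | hlt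
    · have : k ≤ -1 := by omega
      have := mul_le_mul_of_nonneg_left this (le_of_lt hm)
      simp at this; nlinarith
    · have : 1 ≤ k := by omega
      have := mul_le_mul_of_nonneg_left this (le_of_lt hm)
      simp at this; nlinarith
  subst hk0
  simp at hk
  have : (i : ℕ) = (i' : ℕ) := by omega
  exact Fin.ext this

lemma oddInj {i i' : Fin m}
    (h : ((2*(i:ℕ)+1 : ℕ) : ZMod (2*m)) = ((2*(i':ℕ)+1 : ℕ) : ZMod (2*m))) : i = i' := by
  have h1 : ((2*(i:ℕ)+1 : ℕ) : ℤ) ≡ ((2*(i':ℕ)+1 : ℕ) : ℤ) [ZMOD ((2*m : ℕ) : ℤ)] := by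
    exact (ZMod.intCast_eq_intCast_iff ((2*(i:ℕ)+1 : ℕ) : ℤ) ((2*(i':ℕ)+1 : ℕ) : ℤ) (2*m)).mp (by exact_mod_cast h)
  have h2 := Int.ModEq.dvd h1
  apply fin_eq_of_dvd
  obtain ⟨k, hk⟩ := h2
  refine ⟨-k, ?_⟩
  push_cast at hk ⊢
  linarith

lemma evenInj {i i' : Fin m}
    (h : ((2*(i:ℕ)+2 : ℕ) : ZMod (2*m)) = ((2*(i':ℕ)+2 : ℕ) : ZMod (2*m))) : i = i' := by
  have h1 : ((2*(i:ℕ)+2 : ℕ) : ℤ) ≡ ((2*(i':ℕ)+2 : ℕ) : ℤ) [ZMOD ((2*m : ℕ) : ℤ)] := by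
    exact (ZMod.intCast_eq_intCast_iff ((2*(i:ℕ)+2 : ℕ) : ℤ) ((2*(i':ℕ)+2 : ℕ) : ℤ) (2*m)).mp (by exact_mod_cast h)
  have h2 := Int.ModEq.dvd h1
  apply fin_eq_of_dvd
  obtain ⟨k, hk⟩ := h2
  refine ⟨-k, ?_⟩
  push_cast at hk ⊢
  linarith

lemma exists_oddIdx (l : ℤ) (hl : Odd l) :
    ∃ i : Fin m, (2*m : ℤ) ∣ ((2*(i:ℕ)+1 : ℕ) : ℤ) - l := by
  obtain ⟨t, rfl⟩ := hl
  have hm := hm_pos (m := m)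
  have h0 : 0 ≤ t % m := Int.emod_nonneg t (by omega)
  have h1 : t % m < m := Int.emod_lt_of_pos t hm
  refine ⟨⟨(t % m).toNat, by omega⟩, -(t / m), ?_⟩
  have := Int.mul_ediv_add_emod t m
  push_cast [Int.toNat_of_nonneg h0]
  linarith

lemma exists_evenIdx (l : ℤ) (hl : Even l) :
    ∃ i : Fin m, (2*m : ℤ) ∣ ((2*(i:ℕ)+2 : ℕ) : ℤ) - l := by
  obtain ⟨s, rfl⟩ := hl
  have hm := hm_pos (m := m)
  have h0 : 0 ≤ (s-1) % m := Int.emod_nonneg _ (by omega)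
  have h1 : (s-1) % m < m := Int.emod_lt_of_pos _ hm
  refine ⟨⟨((s-1) % m).toNat, by omega⟩, -((s-1) / m), ?_⟩
  have := Int.mul_ediv_add_emod (s-1) m
  push_cast [Int.toNat_of_nonneg h0]
  linarith

lemma finAddOne (i : Fin m) : (m:ℤ) ∣ (((i+1 : Fin m) : ℕ) : ℤ) - ((i:ℕ) + 1) := by
  have h1 : ((i + 1 : Fin m) : ℕ) = ((i:ℕ) + ((1 : Fin m) : ℕ)) % m := Fin.add_def i 1 ▸ rfl
  have h2 : ((1 : Fin m) : ℕ) = 1 % m := Fin.val_one' m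
  have h3 : ((i:ℕ) + 1 % m) % m = ((i:ℕ) + 1) % m := Nat.ModEq.add_left _ (Nat.mod_modEq 1 m)
  have h4 := (Nat.modEq_iff_dvd (n := m)).mp (Nat.mod_modEq ((i:ℕ)+1) m)
  rw [h1, h2, h3]
  push_cast at h4 ⊢
  exact dvd_sub_comm.mp h4


lemma even_of_mem {l : ℤ} {i : Fin m} (hl : l ∈ strIdx m p q ((2*(i:ℕ)+2 : ℕ) : ZMod (2*m))) :
    ∃ e : ℤ, l = 2*e := by
  obtain ⟨-, -, k, hk⟩ := mem_strIdx_iff.mp hl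
  refine ⟨(i:ℕ) + 1 - m*k, ?_⟩
  push_cast at hk; linarith

lemma odd_of_mem {l : ℤ} {i : Fin m} (hl : l ∈ strIdx m p q ((2*(i:ℕ)+1 : ℕ) : ZMod (2*m))) :
    ∃ e : ℤ, l = 2*e + 1 := by
  obtain ⟨-, -, k, hk⟩ := mem_strIdx_iff.mp hl
  refine ⟨(i:ℕ) - m*k, ?_⟩
  push_cast at hk; linarith

lemma M1 (hp : Odd p) {i : Fin m} {l : ℤ}
    (hl : l ∈ strIdx m p q ((2*(i:ℕ)+2 : ℕ) : ZMod (2*m))) :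
    l + (-1) ∈ strIdx m p q ((2*(i:ℕ)+1 : ℕ) : ZMod (2*m)) := by
  obtain ⟨e, rfl⟩ := even_of_mem hl
  obtain ⟨h1, h2, k, hk⟩ := mem_strIdx_iff.mp hl
  obtain ⟨a, ha⟩ := hp
  refine mem_strIdx_iff.mpr ⟨by omega, by omega, ⟨k, by push_cast at hk ⊢; linarith⟩⟩

lemma M2 (hq : Odd q) {i : Fin m} {l : ℤ}
    (hl : l ∈ strIdx m p q ((2*(i:ℕ)+2 : ℕ) : ZMod (2*m))) :
    l + 1 ∈ strIdx m p q ((2*((i+1 : Fin m):ℕ)+1 : ℕ) : ZMod (2*m)) := by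
  obtain ⟨e, rfl⟩ := even_of_mem hl
  obtain ⟨h1, h2, k, hk⟩ := mem_strIdx_iff.mp hl
  obtain ⟨a, ha⟩ := hq
  obtain ⟨k2, hk2⟩ := finAddOne i
  refine mem_strIdx_iff.mpr ⟨by omega, by omega, ⟨k + k2, by push_cast at hk hk2 ⊢; linarith⟩⟩

variable (κ : Type) [Field κ]

/-- evaluation of a tuple of coordinate vectors at an integer index -/
noncomputable def atV {f : Fin m → ZMod (2*m)} (w : ∀ i, (strIdx m p q (f i) : Finset ℤ) → κ) (l : ℤ) : κ :=
  ∑ i : Fin m, ∑ x : (strIdx m p q (f i) : Finset ℤ), if (x : ℤ) = l then w i x else 0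

lemma atV_eq {f : Fin m → ZMod (2*m)} (hinj : ∀ i i', f i = f i' → i = i')
    (w : ∀ i, (strIdx m p q (f i) : Finset ℤ) → κ) {i : Fin m} {l : ℤ}
    (hl : l ∈ strIdx m p q (f i)) : atV κ w l = w i ⟨l, hl⟩ := by
  unfold atV
  rw [Finset.sum_eq_single i]
  · rw [Fintype.sum_eq_single (⟨l, hl⟩ : (strIdx m p q (f i) : Finset ℤ))]
    · simp
    · intro x hx
      rw [if_neg]
      intro hxl
      exact hx (Subtype.ext hxl)
  · intro i' _ hi'
    apply Finset.sum_eq_zero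
    intro x _
    rw [if_neg]
    intro hxl
    apply hi'
    apply hinj
    have m1 : f i' = ((x : ℤ) : ZMod (2*m)) := ((Finset.mem_filter.mp x.2).2).symm
    have m2 : f i = ((l : ℤ) : ZMod (2*m)) := ((Finset.mem_filter.mp hl).2).symm
    rw [m1, m2, hxl]
  · simp

end StrAux

section StrMain

variable {κ : Type} [Field κ] {m : ℕ} [NeZero m] {p q : ℤ}

lemma strRep_blockMap_apply (v : ∀ i, (strRep κ m p q).W i) (i : Fin m)
    (l : (strIdx m p q ((2*(i:ℕ)+2 : ℕ) : ZMod (2*m)) : Finset ℤ)) :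
    (strRep κ m p q).blockMap v i l =
      (if h : ((l:ℤ) + (-1)) ∈ strIdx m p q ((2*(i:ℕ)+1 : ℕ) : ZMod (2*m)) then
        v i ⟨(l:ℤ) + (-1), h⟩ else 0)
      - (if h : ((l:ℤ) + 1) ∈ strIdx m p q ((2*((i+1 : Fin m):ℕ)+1 : ℕ) : ZMod (2*m)) then
        v (i+1) ⟨(l:ℤ) + 1, h⟩ else 0) := rfl

end StrMain

/-- For `p ≤ q` both odd, the block matrix of the string representation
`ρ(p,q)` is surjective and its kernel is one-dimensional. -/
theorem strRep_blockMap_odd_odd {κ : Type} [Field κ] {m : ℕ} [NeZero m]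
    (p q : ℤ) (hpq : p ≤ q) (hp : Odd p) (hq : Odd q) :
    Function.Surjective (strRep κ m p q).blockMap ∧
    finrank κ (LinearMap.ker (strRep κ m p q).blockMap) = 1 := by
  classical
  -- the all-ones kernel vector
  set c : ∀ i, (strRep κ m p q).W i := (fun _ _ => (1:κ)) with hc
  -- kernel equation extraction
  have hker_eq : ∀ v : ∀ i, (strRep κ m p q).W i, (strRep κ m p q).blockMap v = 0 →
      ∀ (i : Fin m) (l : ℤ) (hl : l ∈ strIdx m p q ((2*(i:ℕ)+2 : ℕ) : ZMod (2*m))),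
      v i ⟨l + (-1), StrAux.M1 hp hl⟩ = v (i+1) ⟨l + 1, StrAux.M2 hq hl⟩ := by
    intro v hv i l hl
    have h0 := congrFun (congrFun hv i) ⟨l, hl⟩
    rw [strRep_blockMap_apply v i ⟨l, hl⟩] at h0
    rw [dif_pos (StrAux.M1 hp hl), dif_pos (StrAux.M2 hq hl)] at h0
    have h1 : (0 : ∀ i, (strRep κ m p q).U i) i ⟨l, hl⟩ = 0 := rfl
    rw [h1] at h0
    exact sub_eq_zero.mp h0
  -- constancy of kernel vectors
  have key : ∀ v : ∀ i, (strRep κ m p q).W i, (strRep κ m p q).blockMap v = 0 →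
      ∀ n : ℕ, p + 2*n ≤ q → StrAux.atV κ v (p + 2*n) = StrAux.atV κ v p := by
    intro v hv n
    induction n with
    | zero => intro _; norm_num
    | succ n ih =>
      intro hn
      obtain ⟨i, hi⟩ := StrAux.exists_evenIdx (m := m) (p + 2*n + 1)
        (by obtain ⟨a, ha⟩ := hp; exact ⟨a + n + 1, by omega⟩)
      have hmem : p + 2*n + 1 ∈ strIdx m p q ((2*(i:ℕ)+2 : ℕ) : ZMod (2*m)) :=
        StrAux.mem_strIdx_iff.mpr ⟨by omega, by omega, hi⟩
      have heq := hker_eq v hv i (p + 2*n + 1) hmem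
      have e1 : StrAux.atV κ v (p + 2*n + 1 + (-1)) = v i ⟨p + 2*n + 1 + (-1), StrAux.M1 hp hmem⟩ :=
        StrAux.atV_eq κ (fun _ _ h => StrAux.oddInj h) v (StrAux.M1 hp hmem)
      have e2 : StrAux.atV κ v (p + 2*n + 1 + 1) = v (i+1) ⟨p + 2*n + 1 + 1, StrAux.M2 hq hmem⟩ :=
        StrAux.atV_eq κ (fun _ _ h => StrAux.oddInj h) v (StrAux.M2 hq hmem)
      have e3 : p + 2*(n+1 : ℕ) = p + 2*n + 1 + 1 := by push_cast; ring
      have e4 : p + 2*n + 1 + (-1) = p + 2*(n : ℕ) := by push_cast; ring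
      rw [e3, e2, ← heq, ← e1, e4]
      exact ih (by push_cast at hn ⊢; omega)
  -- kernel = span of c
  have hcker : (strRep κ m p q).blockMap c = 0 := by
    funext i l
    rw [strRep_blockMap_apply c i l, dif_pos (StrAux.M1 hp l.2), dif_pos (StrAux.M2 hq l.2)]
    show (1:κ) - 1 = 0
    ring
  have hkerspan : LinearMap.ker (strRep κ m p q).blockMap = Submodule.span κ {c} := by
    apply le_antisymm
    · intro v hv
      rw [LinearMap.mem_ker] at hv
      rw [Submodule.mem_span_singleton]
      refine ⟨StrAux.atV κ v p, ?_⟩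
      funext i l
      obtain ⟨e, he⟩ := StrAux.odd_of_mem l.2
      obtain ⟨h1, h2, -⟩ := StrAux.mem_strIdx_iff.mp l.2
      obtain ⟨a, ha⟩ := hp
      have hn : ∃ n : ℕ, (l:ℤ) = p + 2*n := ⟨(((l:ℤ) - p)/2).toNat, by omega⟩
      obtain ⟨n, hn⟩ := hn
      have h3 : StrAux.atV κ v ((l:ℤ)) = v i ⟨(l:ℤ), l.2⟩ :=
        StrAux.atV_eq κ (fun _ _ h => StrAux.oddInj h) v l.2
      have h4 : v i ⟨(l:ℤ), l.2⟩ = v i l := by congr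
      have h5 := key v hv n (by omega)
      show StrAux.atV κ v p • (1:κ) = v i l
      rw [smul_eq_mul, mul_one, ← h5, ← hn, h3, h4]
    · rw [Submodule.span_singleton_le_iff_mem, LinearMap.mem_ker]
      exact hcker
  have hc0 : c ≠ 0 := by
    obtain ⟨i₀, hi₀⟩ := StrAux.exists_oddIdx (m := m) p hp
    have hmem : p ∈ strIdx m p q ((2*(i₀:ℕ)+1 : ℕ) : ZMod (2*m)) :=
      StrAux.mem_strIdx_iff.mpr ⟨le_refl p, hpq, hi₀⟩
    intro h
    have := congrFun (congrFun h i₀) ⟨p, hmem⟩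
    exact one_ne_zero this
  constructor
  · -- surjectivity
    intro g
    refine ⟨fun i l => -(∑ i' : Fin m,
      ∑ x : (strIdx m p q ((2*(i':ℕ)+2 : ℕ) : ZMod (2*m)) : Finset ℤ),
        if (x:ℤ) < (l:ℤ) then g i' x else 0), ?_⟩
    funext i l
    refine (strRep_blockMap_apply _ i l).trans ?_
    simp only [dif_pos (StrAux.M1 hp l.2), dif_pos (StrAux.M2 hq l.2)]
    have step : ∀ (i' : Fin m) (x : (strIdx m p q ((2*(i':ℕ)+2 : ℕ) : ZMod (2*m)) : Finset ℤ)),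
        (if (x:ℤ) < (l:ℤ) + 1 then g i' x else 0) - (if (x:ℤ) < (l:ℤ) + (-1) then g i' x else 0)
          = if (x:ℤ) = (l:ℤ) then g i' x else 0 := by
      intro i' x
      obtain ⟨e1, he1⟩ := StrAux.even_of_mem x.2
      obtain ⟨e2, he2⟩ := StrAux.even_of_mem l.2
      split_ifs <;> first | (exfalso; omega) | ring
    calc -(∑ i' : Fin m, ∑ x : (strIdx m p q ((2*(i':ℕ)+2 : ℕ) : ZMod (2*m)) : Finset ℤ),
            if (x:ℤ) < (l:ℤ) + (-1) then g i' x else 0)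
          - -(∑ i' : Fin m, ∑ x : (strIdx m p q ((2*(i':ℕ)+2 : ℕ) : ZMod (2*m)) : Finset ℤ),
            if (x:ℤ) < (l:ℤ) + 1 then g i' x else 0)
        = ∑ i' : Fin m, ∑ x : (strIdx m p q ((2*(i':ℕ)+2 : ℕ) : ZMod (2*m)) : Finset ℤ),
            ((if (x:ℤ) < (l:ℤ) + 1 then g i' x else 0)
              - (if (x:ℤ) < (l:ℤ) + (-1) then g i' x else 0)) := by
          simp only [Finset.sum_sub_distrib]
          ring
      _ = ∑ i' : Fin m, ∑ x : (strIdx m p q ((2*(i':ℕ)+2 : ℕ) : ZMod (2*m)) : Finset ℤ),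
            if (x:ℤ) = (l:ℤ) then g i' x else 0 := by
          refine Finset.sum_congr rfl fun i' _ => Finset.sum_congr rfl fun x _ => step i' x
      _ = g i l := by
          have := StrAux.atV_eq κ (fun _ _ h => StrAux.evenInj h) g l.2
          unfold StrAux.atV at this
          rw [this]
  · rw [hkerspan]
    exact finrank_span_singleton hc0
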